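/- For any poset (X, ≤), any word w in X*, and any set T ⊆ {1, …, n−1} (where n = |w|), the number of words w' equivalent to w with DES(w') ⊆ T equals the number of words w' equivalent to w with ASC(w') ⊆ T. -/

import Mathlib

/-- Adjacency in the free monoid over a poset: swap of two adjacent,
distinct and comparable letters. -/
inductive PCM.Adj {X : Type*} [PartialOrder X] : List X → List X → Prop
  | swap (u v : List X) (a b : X) (hne : a ≠ b) (hcomp : a ≤ b ∨ b ≤ a) :
      PCM.Adj (u ++ a :: b :: v) (u ++ b :: a :: v)

/-- Equivalence in the partially commutative monoid `L(X, ≤)`. -/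
def PCM.Equiv {X : Type*} [PartialOrder X] (w w' : List X) : Prop :=
  Relation.ReflTransGen PCM.Adj w w'

/-- Descent set: positions `i`, `1 ≤ i ≤ n-1`, with `x_i > x_{i+1}`. -/
def PCM.DES {X : Type*} [PartialOrder X] (w : List X) : Set ℕ :=
  {i | ∃ h : i < w.length, 0 < i ∧ w[i]'h < w[i - 1]'(by omega)}

/-- Rise set: positions `i`, `1 ≤ i ≤ n-1`, with `x_i < x_{i+1}`. -/
def PCM.ASC {X : Type*} [PartialOrder X] (w : List X) : Set ℕ :=
  {i | ∃ h : i < w.length, 0 < i ∧ w[i - 1]'(by omega) < w[i]'h}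

namespace PCMProof
open Relation

section Abstract
variable {r : X → X → Prop} {T : Set ℕ}

def Step (r : X → X → Prop) (T : Set ℕ) (w w' : List X) : Prop :=
  ∃ (u v : List X) (a b : X), r a b ∧ (u.length + 1) ∉ T ∧ w = u ++ a :: b :: v ∧ w' = u ++ b :: a :: v

def IsNF (r : X → X → Prop) (T : Set ℕ) (w : List X) : Prop := ∀ w', ¬ Step r T w w'

open Classical in
noncomputable def cnt (r : X → X → Prop) (a : X) : List X → ℕ
  | [] => 0
  | b :: l => (if r a b then 1 else 0) + cnt r a l

noncomputable def meas (r : X → X → Prop) : List X → ℕ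
  | [] => 0
  | a :: l => cnt r a l + meas r l

lemma cnt_append (a : X) (u v : List X) : cnt r a (u ++ v) = cnt r a u + cnt r a v := by
  induction u with
  | nil => simp [cnt]
  | cons b u ih => simp [cnt, ih]; omega

lemma cnt_swap (x a b : X) (v : List X) : cnt r x (a :: b :: v) = cnt r x (b :: a :: v) := by
  simp [cnt]; omega

lemma meas_append (u l : List X) :
    meas r (u ++ l) = meas r u + (u.map fun x => cnt r x l).sum + meas r l := by
  induction u with
  | nil => simp [meas]
  | cons a u ih => simp [meas, cnt_append, ih]; omega

lemma meas_step_lt (hasymm : ∀ ⦃a b⦄, r a b → ¬ r b a)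
    {u v : List X} {a b : X} (hr : r a b) :
    meas r (u ++ b :: a :: v) < meas r (u ++ a :: b :: v) := by
  rw [meas_append, meas_append]
  have hmap : (u.map fun x => cnt r x (b :: a :: v)) = u.map fun x => cnt r x (a :: b :: v) :=
    List.map_congr_left fun x _ => (cnt_swap x a b v).symm
  rw [hmap]
  have h1 : meas r (a :: b :: v) = 1 + cnt r a v + cnt r b v + meas r v := by
    simp [meas, cnt, if_pos hr]; omega
  have h2 : meas r (b :: a :: v) = cnt r b v + cnt r a v + meas r v := by
    simp [meas, cnt, if_neg (hasymm hr)]; omega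
  omega

lemma meas_step_lt' (hasymm : ∀ ⦃a b⦄, r a b → ¬ r b a) {w w' : List X}
    (h : Step r T w w') : meas r w' < meas r w := by
  obtain ⟨u, v, a, b, hr, -, rfl, rfl⟩ := h
  exact meas_step_lt hasymm hr

lemma exists_nf (hasymm : ∀ ⦃a b⦄, r a b → ¬ r b a) (T : Set ℕ) (w : List X) :
    ∃ z, ReflTransGen (Step r T) w z ∧ IsNF r T z := by
  generalize hn : meas r w = n
  induction n using Nat.strong_induction_on generalizing w with
  | _ n ih =>
    by_cases hw : IsNF r T w
    · exact ⟨w, .refl, hw⟩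
    · simp only [IsNF, not_forall, not_not] at hw
      obtain ⟨w₁, hstep⟩ := hw
      have hlt : meas r w₁ < n := hn ▸ meas_step_lt' hasymm hstep
      obtain ⟨z, hz1, hz2⟩ := ih (meas r w₁) hlt (w := w₁) rfl
      exact ⟨z, .head hstep hz1, hz2⟩

lemma join_aux (htrans : ∀ ⦃a b c⦄, r a b → r b c → r a c)
    {u₁ v₁ u₂ v₂ : List X} {a₁ b₁ a₂ b₂ : X}
    (hr₁ : r a₁ b₁) (hr₂ : r a₂ b₂) (hT₁ : u₁.length + 1 ∉ T) (hT₂ : u₂.length + 1 ∉ T)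
    (heq : u₁ ++ a₁ :: b₁ :: v₁ = u₂ ++ a₂ :: b₂ :: v₂)
    (hle : u₁.length ≤ u₂.length) :
    ∃ d, ReflTransGen (Step r T) (u₁ ++ b₁ :: a₁ :: v₁) d ∧
         ReflTransGen (Step r T) (u₂ ++ b₂ :: a₂ :: v₂) d := by
  rcases List.append_eq_append_iff.mp heq with ⟨k, hu₂, hs⟩ | ⟨k, hu₁, hs⟩
  · rcases k with _ | ⟨c, _ | ⟨c', k'⟩⟩
    · simp only [List.append_nil] at hu₂
      simp only [List.nil_append, List.cons.injEq] at hs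
      obtain ⟨h1, h2, h3⟩ := hs
      subst h1; subst h2; subst h3; subst hu₂
      exact ⟨_, .refl, .refl⟩
    · simp only [List.cons_append, List.nil_append, List.cons.injEq] at hs
      obtain ⟨h1, h2, h3⟩ := hs
      subst h1; subst h2; subst h3; subst hu₂
      have hr₃ : r a₁ b₂ := htrans hr₁ hr₂
      have hT₂' : u₁.length + 2 ∉ T := by simpa using hT₂
      refine ⟨u₁ ++ b₂ :: b₁ :: a₁ :: v₂, ?_, ?_⟩
      · have s1 : Step r T (u₁ ++ b₁ :: a₁ :: b₂ :: v₂) (u₁ ++ b₁ :: b₂ :: a₁ :: v₂) :=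
          ⟨u₁ ++ [b₁], v₂, a₁, b₂, hr₃, by simpa using hT₂', by simp, by simp⟩
        have s2 : Step r T (u₁ ++ b₁ :: b₂ :: a₁ :: v₂) (u₁ ++ b₂ :: b₁ :: a₁ :: v₂) :=
          ⟨u₁, a₁ :: v₂, b₁, b₂, hr₂, hT₁, by simp, by simp⟩
        exact (ReflTransGen.single s2).head s1
      · have s1 : Step r T (u₁ ++ [a₁] ++ b₂ :: b₁ :: v₂) (u₁ ++ b₂ :: a₁ :: b₁ :: v₂) :=
          ⟨u₁, b₁ :: v₂, a₁, b₂, hr₃, hT₁, by simp, by simp⟩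
        have s2 : Step r T (u₁ ++ b₂ :: a₁ :: b₁ :: v₂) (u₁ ++ b₂ :: b₁ :: a₁ :: v₂) :=
          ⟨u₁ ++ [b₂], v₂, a₁, b₁, hr₁, by simpa using hT₂', by simp, by simp⟩
        exact (ReflTransGen.single s2).head s1
    · simp only [List.cons_append, List.cons.injEq] at hs
      obtain ⟨h1, h2, h3⟩ := hs
      subst h1; subst h2; subst h3; subst hu₂
      refine ⟨u₁ ++ b₁ :: a₁ :: (k' ++ b₂ :: a₂ :: v₂), ReflTransGen.single ?_,
        ReflTransGen.single ?_⟩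
      · exact ⟨u₁ ++ b₁ :: a₁ :: k', v₂, a₂, b₂, hr₂, by simpa using hT₂, by simp, by simp⟩
      · exact ⟨u₁, k' ++ b₂ :: a₂ :: v₂, a₁, b₁, hr₁, hT₁, by simp, by simp⟩
  · have hk : k = [] := by
      have := congrArg List.length hu₁
      simp at this
      exact List.eq_nil_of_length_eq_zero (by omega)
    subst hk
    simp only [List.append_nil] at hu₁
    simp only [List.nil_append, List.cons.injEq] at hs
    obtain ⟨h1, h2, h3⟩ := hs
    subst h1; subst h2; subst h3; subst hu₁
    exact ⟨_, .refl, .refl⟩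

lemma join (htrans : ∀ ⦃a b c⦄, r a b → r b c → r a c) {w x y : List X}
    (h1 : Step r T w x) (h2 : Step r T w y) :
    ∃ d, ReflTransGen (Step r T) x d ∧ ReflTransGen (Step r T) y d := by
  obtain ⟨u₁, v₁, a₁, b₁, hr₁, hT₁, rfl, rfl⟩ := h1
  obtain ⟨u₂, v₂, a₂, b₂, hr₂, hT₂, heq, rfl⟩ := h2
  rcases le_total u₁.length u₂.length with hle | hle
  · exact join_aux htrans hr₁ hr₂ hT₁ hT₂ heq hle
  · obtain ⟨d, hd₁, hd₂⟩ := join_aux htrans hr₂ hr₁ hT₂ hT₁ heq.symm hle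
    exact ⟨d, hd₂, hd₁⟩

lemma rtg_of_nf {z d : List X} (hz : IsNF r T z) (h : ReflTransGen (Step r T) z d) : z = d := by
  rcases h.cases_head with rfl | ⟨c, hc, -⟩
  · rfl
  · exact absurd hc (hz c)

lemma newman (htrans : ∀ ⦃a b c⦄, r a b → r b c → r a c)
    (hasymm : ∀ ⦃a b⦄, r a b → ¬ r b a) :
    ∀ n (w x y : List X), meas r w ≤ n → ReflTransGen (Step r T) w x →
      ReflTransGen (Step r T) w y → IsNF r T x → IsNF r T y → x = y := by
  intro n
  induction n with
  | zero =>
    intro w x y hm hx hy hnx hny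
    rcases hx.cases_head with rfl | ⟨x₁, hsx, -⟩
    · exact rtg_of_nf hnx hy
    · exact absurd (meas_step_lt' hasymm hsx) (by omega)
  | succ n ih =>
    intro w x y hm hx hy hnx hny
    rcases hx.cases_head with rfl | ⟨x₁, hsx, hx₁⟩
    · exact rtg_of_nf hnx hy
    · rcases hy.cases_head with rfl | ⟨y₁, hsy, hy₁⟩
      · exact (rtg_of_nf hny (ReflTransGen.head hsx hx₁)).symm
      · obtain ⟨d, hd₁, hd₂⟩ := join htrans hsx hsy
        obtain ⟨e, he₁, he₂⟩ := exists_nf hasymm T d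
        have hmx : meas r x₁ ≤ n := by
          have := meas_step_lt' (T := T) hasymm hsx; omega
        have hmy : meas r y₁ ≤ n := by
          have := meas_step_lt' (T := T) hasymm hsy; omega
        have ex : x = e := ih x₁ x e hmx hx₁ (hd₁.trans he₁) hnx he₂
        have ey : y = e := ih y₁ y e hmy hy₁ (hd₂.trans he₁) hny he₂
        rw [ex, ey]

variable (r T) in
noncomputable def nf (hasymm : ∀ ⦃a b⦄, r a b → ¬ r b a) (w : List X) : List X :=
  Classical.choose (exists_nf hasymm T w)

lemma nf_rtg (hasymm : ∀ ⦃a b⦄, r a b → ¬ r b a) (w : List X) :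
    ReflTransGen (Step r T) w (nf r T hasymm w) :=
  (Classical.choose_spec (exists_nf hasymm T w)).1

lemma nf_isNF (hasymm : ∀ ⦃a b⦄, r a b → ¬ r b a) (w : List X) :
    IsNF r T (nf r T hasymm w) :=
  (Classical.choose_spec (exists_nf hasymm T w)).2

lemma nf_unique (htrans : ∀ ⦃a b c⦄, r a b → r b c → r a c)
    (hasymm : ∀ ⦃a b⦄, r a b → ¬ r b a) {w z : List X}
    (h : ReflTransGen (Step r T) w z) (hz : IsNF r T z) : z = nf r T hasymm w :=
  newman htrans hasymm (meas r w) w z _ le_rfl h (nf_rtg hasymm w) hz (nf_isNF hasymm w)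

lemma nf_of_isNF (htrans : ∀ ⦃a b c⦄, r a b → r b c → r a c)
    (hasymm : ∀ ⦃a b⦄, r a b → ¬ r b a) {w : List X} (hw : IsNF r T w) :
    nf r T hasymm w = w :=
  (nf_unique htrans hasymm .refl hw).symm

lemma nf_eqvGen (htrans : ∀ ⦃a b c⦄, r a b → r b c → r a c)
    (hasymm : ∀ ⦃a b⦄, r a b → ¬ r b a) {a b : List X}
    (h : EqvGen (Step r T) a b) : nf r T hasymm a = nf r T hasymm b := by
  induction h with
  | rel x y hxy =>
    exact (nf_unique htrans hasymm (ReflTransGen.head hxy (nf_rtg hasymm y))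
      (nf_isNF hasymm y)).symm
  | refl x => rfl
  | symm x y _ ih => exact ih.symm
  | trans x y z _ _ ih₁ ih₂ => exact ih₁.trans ih₂

lemma step_flip {w w' : List X} (h : Step r T w w') :
    Step (fun a b => r b a) T w' w := by
  obtain ⟨u, v, a, b, hr, hT, rfl, rfl⟩ := h
  exact ⟨u, v, b, a, hr, hT, rfl, rfl⟩

lemma rtg_flip {x y : List X} (h : ReflTransGen (Step r T) x y) :
    ReflTransGen (Step (fun a b => r b a) T) y x := by
  induction h with
  | refl => exact .refl
  | tail _ hstep ih => exact ih.head (step_flip hstep)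

lemma eqvGen_flip {x y : List X} (h : EqvGen (Step r T) x y) :
    EqvGen (Step (fun a b => r b a) T) x y := by
  induction h with
  | rel a b hab => exact .symm _ _ (.rel _ _ (step_flip hab))
  | refl a => exact .refl a
  | symm a b _ ih => exact ih.symm _ _
  | trans a b c _ _ ih₁ ih₂ => exact ih₁.trans _ _ _ ih₂

lemma rtg_eqvGen {x y : List X} (h : ReflTransGen (Step r T) x y) :
    EqvGen (Step r T) x y := by
  induction h with
  | refl => exact .refl x
  | tail _ hstep ih => exact ih.trans _ _ _ (.rel _ _ hstep)

end Abstract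

section Concrete

variable {X : Type*} [PartialOrder X] {T : Set ℕ} {w : List X}

lemma decomp_at (w : List X) {i : ℕ} (h : i < w.length) (hpos : 0 < i) :
    w = w.take (i - 1) ++ (w[i - 1]'(by omega)) :: (w[i]'h) :: w.drop (i + 1) := by
  conv_lhs => rw [← List.take_append_drop (i - 1) w]
  congr 1
  rw [List.drop_eq_getElem_cons (by omega)]
  have h1 : i - 1 + 1 = i := by omega
  rw [h1, List.drop_eq_getElem_cons (by omega)]

lemma isNF_gt_iff : IsNF (fun a b : X => b < a) T w ↔ PCM.DES w ⊆ T := by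
  constructor
  · intro hnf i hi
    obtain ⟨h, hpos, hlt⟩ := hi
    by_contra hiT
    refine hnf (w.take (i - 1) ++ (w[i]'h) :: (w[i - 1]'(by omega)) :: w.drop (i + 1))
      ⟨w.take (i - 1), w.drop (i + 1), w[i - 1]'(by omega), w[i]'h, hlt, ?_, decomp_at w h hpos, rfl⟩
    have hl : (w.take (i - 1)).length + 1 = i := by
      simp only [List.length_take]
      omega
    rw [hl]; exact hiT
  · rintro hsub w' ⟨u, v, a, b, hba, hTpos, rfl, rfl⟩
    refine hTpos ?_
    have hlen : u.length + 1 < (u ++ a :: b :: v).length := by simp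
    have e1 : (u ++ a :: b :: v)[u.length + 1]'hlen = b := by
      rw [List.getElem_append_right (by omega)]
      simp
    have e0 : (u ++ a :: b :: v)[u.length + 1 - 1]'(by simpa using by omega) = a := by
      rw [List.getElem_append_right (by omega)]
      simp
    refine hsub ⟨hlen, Nat.succ_pos _, ?_⟩
    rw [e1, e0]
    exact hba

lemma isNF_lt_iff : IsNF (fun a b : X => a < b) T w ↔ PCM.ASC w ⊆ T := by
  constructor
  · intro hnf i hi
    obtain ⟨h, hpos, hlt⟩ := hi
    by_contra hiT
    refine hnf (w.take (i - 1) ++ (w[i]'h) :: (w[i - 1]'(by omega)) :: w.drop (i + 1))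
      ⟨w.take (i - 1), w.drop (i + 1), w[i - 1]'(by omega), w[i]'h, hlt, ?_, decomp_at w h hpos, rfl⟩
    have hl : (w.take (i - 1)).length + 1 = i := by
      simp only [List.length_take]
      omega
    rw [hl]; exact hiT
  · rintro hsub w' ⟨u, v, a, b, hba, hTpos, rfl, rfl⟩
    refine hTpos ?_
    have hlen : u.length + 1 < (u ++ a :: b :: v).length := by simp
    have e1 : (u ++ a :: b :: v)[u.length + 1]'hlen = b := by
      rw [List.getElem_append_right (by omega)]
      simp
    have e0 : (u ++ a :: b :: v)[u.length + 1 - 1]'(by simpa using by omega) = a := by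
      rw [List.getElem_append_right (by omega)]
      simp
    refine hsub ⟨hlen, Nat.succ_pos _, ?_⟩
    rw [e1, e0]
    exact hba

lemma step_lt_adj {x y : List X} (h : Step (fun a b : X => a < b) T x y) : PCM.Adj x y := by
  obtain ⟨u, v, a, b, hr, -, rfl, rfl⟩ := h
  exact PCM.Adj.swap u v a b (ne_of_lt hr) (Or.inl hr.le)

lemma step_gt_adj {x y : List X} (h : Step (fun a b : X => b < a) T x y) : PCM.Adj x y := by
  obtain ⟨u, v, a, b, hr, -, rfl, rfl⟩ := h
  exact PCM.Adj.swap u v a b (ne_of_lt hr).symm (Or.inr hr.le)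

end Concrete

section Main
variable {X : Type*} [PartialOrder X]

theorem stmt_3' (w : List X) (T : Set ℕ)
    (hT : T ⊆ Set.Icc 1 (w.length - 1)) :
    {w' : List X | PCM.Equiv w w' ∧ PCM.DES w' ⊆ T}.ncard
      = {w' : List X | PCM.Equiv w w' ∧ PCM.ASC w' ⊆ T}.ncard := by
  classical
  have hal : ∀ ⦃a b : X⦄, (fun a b : X => a < b) a b → ¬ (fun a b : X => a < b) b a :=
    fun _ _ h => lt_asymm h
  have hag : ∀ ⦃a b : X⦄, (fun a b : X => b < a) a b → ¬ (fun a b : X => b < a) b a :=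
    fun _ _ h => lt_asymm h
  have htl : ∀ ⦃a b c : X⦄, (fun a b : X => a < b) a b → (fun a b : X => a < b) b c →
      (fun a b : X => a < b) a c := fun _ _ _ h h' => lt_trans h h'
  have htg : ∀ ⦃a b c : X⦄, (fun a b : X => b < a) a b → (fun a b : X => b < a) b c →
      (fun a b : X => b < a) a c := fun _ _ _ h h' => lt_trans h' h
  set A := {w' : List X | PCM.Equiv w w' ∧ PCM.DES w' ⊆ T} with hA
  set B := {w' : List X | PCM.Equiv w w' ∧ PCM.ASC w' ⊆ T} with hB
  let f : List X → List X := nf (fun a b : X => a < b) T hal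
  let g : List X → List X := nf (fun a b : X => b < a) T hag
  have hbij : Set.BijOn f A B := by
    refine ⟨?_, ?_, ?_⟩
    · -- MapsTo
      intro x hx
      refine ⟨hx.1.trans (ReflTransGen.mono (fun _ _ h => step_lt_adj h) _ _ (nf_rtg hal x)), ?_⟩
      exact isNF_lt_iff.mp (nf_isNF hal x)
    · -- InjOn
      intro x hx y hy hfxy
      have h1 : EqvGen (Step (fun a b : X => a < b) T) x y := by
        refine (rtg_eqvGen (nf_rtg hal x)).trans _ _ _ ?_
        rw [show nf (fun a b : X => a < b) T hal x = nf (fun a b : X => a < b) T hal y from hfxy]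
        exact (rtg_eqvGen (nf_rtg hal y)).symm _ _
      have h2 : EqvGen (Step (fun a b : X => b < a) T) x y := eqvGen_flip h1
      have hx2 : IsNF (fun a b : X => b < a) T x := isNF_gt_iff.mpr hx.2
      have hy2 : IsNF (fun a b : X => b < a) T y := isNF_gt_iff.mpr hy.2
      calc x = nf (fun a b : X => b < a) T hag x := (nf_of_isNF htg hag hx2).symm
        _ = nf (fun a b : X => b < a) T hag y := nf_eqvGen htg hag h2
        _ = y := nf_of_isNF htg hag hy2
    · -- SurjOn
      intro b hb
      refine ⟨g b, ⟨?_, ?_⟩, ?_⟩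
      · exact hb.1.trans (ReflTransGen.mono (fun _ _ h => step_gt_adj h) _ _ (nf_rtg hag b))
      · exact isNF_gt_iff.mp (nf_isNF hag b)
      · have hr : ReflTransGen (Step (fun a b : X => a < b) T) (g b) b :=
          rtg_flip (nf_rtg hag b)
        exact (nf_unique htl hal hr (isNF_lt_iff.mpr hb.2)).symm
  rw [← hbij.image_eq, Set.ncard_image_of_injOn hbij.injOn]

end Main


end PCMProof

/-- For any `T ⊆ {1, …, n-1}`, the number of words equivalent to `w` whose
descent set is contained in `T` equals the number of words equivalent to `w`
whose rise set is contained in `T`. -/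
theorem stmt_3 {X : Type*} [PartialOrder X] (w : List X) (T : Set ℕ)
    (hT : T ⊆ Set.Icc 1 (w.length - 1)) :
    {w' : List X | PCM.Equiv w w' ∧ PCM.DES w' ⊆ T}.ncard
      = {w' : List X | PCM.Equiv w w' ∧ PCM.ASC w' ⊆ T}.ncard := by
  exact PCMProof.stmt_3' w T hT
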